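/- Let g : ℝ → ℝ be three times continuously differentiable, let κ ∈ ℝ, and suppose g(0) = 0 and g''(0) = -κ·g'(0). Let s ≠ 0 with 1 - κs/2 ≠ 0, and let M be an upper bound for |g'''| on the closed interval with endpoints 0 and s. Then |g'(0) - g(s)/(s·(1 - κs/2))| ≤ M·s²/(6·|1 - κs/2|) and |g''(0) + κ·g(s)/(s·(1 - κs/2))| ≤ |κ|·M·s²/(6·|1 - κs/2|). -/

import Mathlib

open Set

private lemma iterDW_eq {g : ℝ → ℝ} (hg : ContDiff ℝ 3 g) {S : Set ℝ}
    (hS : UniqueDiffOn ℝ S) {m : ℕ} (hm : m ≤ 3) :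
    ∀ x ∈ S, iteratedDerivWithin m g S x = iteratedDeriv m g x := by
  induction m with
  | zero => intro x hx; simp [iteratedDerivWithin_zero, iteratedDeriv_zero]
  | succ k ih =>
    intro x hx
    have hk : k ≤ 3 := by omega
    have hdiff : DifferentiableAt ℝ (iteratedDeriv k g) x := by
      have : ContDiff ℝ ((1 : ℕ) : ℕ∞) (deriv^[k] g) := by
        apply ContDiff.iterate_deriv' 1 k
        exact hg.of_le (by exact_mod_cast (show 1 + k ≤ 3 by omega))
      rw [← iteratedDeriv_eq_iterate] at this
      exact (this.differentiable (by norm_num)).differentiableAt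
    rw [iteratedDerivWithin_succ,
      derivWithin_congr (fun y hy => ih hk y hy) (ih hk x hx),
      hdiff.derivWithin (hS x hx), ← iteratedDeriv_succ]

private lemma iter3_eq (h : ℝ → ℝ) : iteratedDeriv 3 h = deriv (deriv (deriv h)) := by
  rw [show (3:ℕ) = 2 + 1 from rfl, iteratedDeriv_succ, show (2:ℕ) = 1 + 1 from rfl,
    iteratedDeriv_succ, iteratedDeriv_one]

private lemma iter2_eq (h : ℝ → ℝ) : iteratedDeriv 2 h = deriv (deriv h) := by
  rw [show (2:ℕ) = 1 + 1 from rfl, iteratedDeriv_succ, iteratedDeriv_one]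

private lemma taylor3_pos (g : ℝ → ℝ) (hg : ContDiff ℝ 3 g) {s : ℝ} (hs : 0 < s) (M : ℝ)
    (hM : ∀ x ∈ Icc (0:ℝ) s, |deriv (deriv (deriv g)) x| ≤ M) :
    |g s - (g 0 + deriv g 0 * s + deriv (deriv g) 0 * (s ^ 2 / 2))| ≤ M * s ^ 3 / 6 := by
  have hS : UniqueDiffOn ℝ (Icc (0:ℝ) s) := uniqueDiffOn_Icc hs
  have hEq : ∀ m : ℕ, m ≤ 3 → ∀ x ∈ Icc (0:ℝ) s,
      iteratedDerivWithin m g (Icc 0 s) x = iteratedDeriv m g x :=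
    fun m hm => iterDW_eq hg hS hm
  have hcd : ContDiffOn ℝ 2 g (Icc 0 s) := (hg.of_le (by norm_num)).contDiffOn
  have hdiff : DifferentiableOn ℝ (iteratedDerivWithin 2 g (Icc 0 s)) (Ioo 0 s) := by
    have hd2 : Differentiable ℝ (iteratedDeriv 2 g) := by
      have : ContDiff ℝ ((1 : ℕ) : ℕ∞) (deriv^[2] g) :=
        ContDiff.iterate_deriv' 1 2 (by exact_mod_cast hg)
      rw [← iteratedDeriv_eq_iterate] at this
      exact this.differentiable (by norm_num)
    intro x hx
    refine ((hd2 x).differentiableWithinAt).congr_of_eventuallyEq ?_ ?_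
    · filter_upwards [self_mem_nhdsWithin] with y hy
      exact hEq _ (by omega) y (Ioo_subset_Icc_self hy)
    · exact hEq _ (by omega) x (Ioo_subset_Icc_self hx)
  obtain ⟨x', hx', heq⟩ := taylor_mean_remainder_lagrange (n := 2) hs.ne
    (by rw [uIcc_of_le hs.le]; exact hcd) (by rw [uIcc_of_le hs.le, uIoo_of_le hs.le]; exact hdiff)
  rw [uIcc_of_le hs.le] at heq
  rw [uIoo_of_le hs.le] at hx'
  have hT : taylorWithinEval g 2 (Icc 0 s) 0 s
      = g 0 + deriv g 0 * s + deriv (deriv g) 0 * (s ^ 2 / 2) := by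
    rw [taylor_within_apply]
    rw [Finset.sum_range_succ, Finset.sum_range_succ, Finset.sum_range_one]
    have h0 : (0:ℝ) ∈ Icc (0:ℝ) s := ⟨le_refl _, hs.le⟩
    rw [hEq _ (by omega) 0 h0, hEq _ (by omega) 0 h0, hEq _ (by omega) 0 h0]
    simp [iteratedDeriv_zero, iteratedDeriv_one, iter2_eq]
    ring
  rw [hT] at heq
  rw [heq]
  have hx'' : x' ∈ Icc (0:ℝ) s := Ioo_subset_Icc_self hx'
  rw [hEq _ (by omega) x' hx'', iter3_eq]
  have hb := hM x' hx''
  rw [sub_zero, abs_div, abs_mul, abs_pow, abs_of_pos hs]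
  norm_num [Nat.factorial]
  calc |deriv (deriv (deriv g)) x'| * s ^ 3 / 6
      = |deriv (deriv (deriv g)) x'| * (s ^ 3 / 6) := by ring
    _ ≤ M * (s ^ 3 / 6) := mul_le_mul_of_nonneg_right hb (by positivity)
    _ = M * s ^ 3 / 6 := by ring

private lemma taylor3 (g : ℝ → ℝ) (hg : ContDiff ℝ 3 g) {s : ℝ} (hs : s ≠ 0) (M : ℝ)
    (hM : ∀ x ∈ uIcc 0 s, |deriv (deriv (deriv g)) x| ≤ M) :
    |g s - (g 0 + deriv g 0 * s + deriv (deriv g) 0 * (s ^ 2 / 2))| ≤ M * |s| ^ 3 / 6 := by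
  rcases lt_or_gt_of_ne hs with hneg | hpos
  · -- s < 0 : apply positive case to g ∘ neg
    set f : ℝ → ℝ := fun x => g (-x) with hf
    have hfc : ContDiff ℝ 3 f := hg.comp contDiff_neg
    have hiter : ∀ (n : ℕ) (a : ℝ), iteratedDeriv n f a = (-1:ℝ) ^ n * iteratedDeriv n g (-a) := by
      intro n a
      have := iteratedDeriv_comp_neg (𝕜 := ℝ) (F := ℝ) n g a
      simpa [smul_eq_mul] using this
    have hMf : ∀ x ∈ Icc (0:ℝ) (-s), |deriv (deriv (deriv f)) x| ≤ M := by
      intro x hx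
      have : deriv (deriv (deriv f)) x = iteratedDeriv 3 f x := by rw [iter3_eq]
      rw [this, hiter 3 x]
      rw [iter3_eq]
      have hmem : -x ∈ uIcc (0:ℝ) s := by
        rw [uIcc_of_ge hneg.le]
        constructor
        · linarith [hx.2]
        · linarith [hx.1]
      calc |(-1:ℝ)^3 * deriv (deriv (deriv g)) (-x)| = |deriv (deriv (deriv g)) (-x)| := by
            rw [abs_mul]; norm_num
        _ ≤ M := hM _ hmem
    have key := taylor3_pos f hfc (s := -s) (by linarith) M hMf
    have hf1 : f (-s) = g s := by simp [hf]
    have hf0 : f 0 = g 0 := by simp [hf]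
    have hd1 : deriv f 0 = -deriv g 0 := by
      have := hiter 1 0
      simpa [iteratedDeriv_one] using this
    have hd2 : deriv (deriv f) 0 = deriv (deriv g) 0 := by
      have := hiter 2 0
      rw [iter2_eq, iter2_eq] at this
      simpa using this
    rw [hf1, hf0, hd1, hd2] at key
    have habs : |s| = -s := abs_of_neg hneg
    calc |g s - (g 0 + deriv g 0 * s + deriv (deriv g) 0 * (s ^ 2 / 2))|
        = |g s - (g 0 + -deriv g 0 * (-s) + deriv (deriv g) 0 * ((-s) ^ 2 / 2))| := by
          ring_nf
      _ ≤ M * (-s) ^ 3 / 6 := key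
      _ = M * |s| ^ 3 / 6 := by rw [habs]
  · have hMf : ∀ x ∈ Icc (0:ℝ) s, |deriv (deriv (deriv g)) x| ≤ M := by
      intro x hx; exact hM x (by rwa [uIcc_of_le hpos.le])
    have := taylor3_pos g hg hpos M hMf
    rwa [abs_of_pos hpos]

/-- One-dimensional form of the extrapolation formulas for the first and second
normal derivatives at the boundary: if `g(0) = 0` and `g''(0) = -κ·g'(0)`, then
`g'(0) ≈ g(s)/(s(1 - κs/2))` and `g''(0) ≈ -κ·g(s)/(s(1 - κs/2))` with errors
controlled by the third derivative. -/
theorem normal_derivative_extrapolation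
    (g : ℝ → ℝ) (hg : ContDiff ℝ 3 g) (κ : ℝ)
    (h0 : g 0 = 0) (h2 : deriv (deriv g) 0 = -κ * deriv g 0)
    (s : ℝ) (hs : s ≠ 0) (hκs : 1 - κ * s / 2 ≠ 0)
    (M : ℝ) (hM : ∀ x ∈ uIcc 0 s, |deriv (deriv (deriv g)) x| ≤ M) :
    |deriv g 0 - g s / (s * (1 - κ * s / 2))| ≤ M * s ^ 2 / (6 * |1 - κ * s / 2|) ∧
    |deriv (deriv g) 0 + κ * (g s / (s * (1 - κ * s / 2)))|
      ≤ |κ| * M * s ^ 2 / (6 * |1 - κ * s / 2|) := by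
  set D : ℝ := s * (1 - κ * s / 2) with hDdef
  have hD : D ≠ 0 := mul_ne_zero hs hκs
  have key := taylor3 g hg hs M hM
  have hpoly : g 0 + deriv g 0 * s + deriv (deriv g) 0 * (s ^ 2 / 2) = deriv g 0 * D := by
    rw [h0, h2, hDdef]; ring
  rw [hpoly] at key
  have habsD : |D| = |s| * |1 - κ * s / 2| := abs_mul _ _
  have hfirst : |deriv g 0 - g s / D| ≤ M * s ^ 2 / (6 * |1 - κ * s / 2|) := by
    have heq : deriv g 0 - g s / D = -(g s - deriv g 0 * D) / D := by
      field_simp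
      ring
    rw [heq, abs_div, abs_neg]
    rw [div_le_div_iff₀ (abs_pos.mpr hD) (by positivity)]
    calc |g s - deriv g 0 * D| * (6 * |1 - κ * s / 2|)
        ≤ (M * |s| ^ 3 / 6) * (6 * |1 - κ * s / 2|) := by
          apply mul_le_mul_of_nonneg_right key (by positivity)
      _ = M * s ^ 2 * (|s| * |1 - κ * s / 2|) := by
          rw [show |s| ^ 3 = s ^ 2 * |s| from by rw [pow_succ' |s| 2, sq_abs]; ring]
          ring
      _ = M * s ^ 2 * |D| := by rw [habsD]
  refine ⟨hfirst, ?_⟩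
  have heq2 : deriv (deriv g) 0 + κ * (g s / D) = -κ * (deriv g 0 - g s / D) := by
    rw [h2]; ring
  rw [heq2, abs_mul, abs_neg]
  calc |κ| * |deriv g 0 - g s / D| ≤ |κ| * (M * s ^ 2 / (6 * |1 - κ * s / 2|)) :=
        mul_le_mul_of_nonneg_left hfirst (abs_nonneg κ)
    _ = |κ| * M * s ^ 2 / (6 * |1 - κ * s / 2|) := by ring
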